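/- Let n ≥ 6, i ≥ 5 and k ≥ 1 with i + k ≤ n − 1. Let G be the graph obtained from the cycle C_n = v_1 v_2 … v_n v_1 by adding the k + 1 chords {v_1, v_i}, {v_1, v_{i+1}}, …, {v_1, v_{i+k−1}}, and {v_2, v_{i−1}}. Then γ̄_p(G) = 0; that is, every nonempty subset of vertices of G is a power dominating set. -/

import Mathlib

/-- The closed neighborhood `N[S]` of a set `S` of vertices: `S` together with
all vertices adjacent to a vertex of `S`. -/
def closedNbhdSet {V : Type*} (G : SimpleGraph V) (S : Set V) : Set V :=
  S ∪ {v | ∃ u ∈ S, G.Adj u v}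

/-- The monitored sets `P^i(S)` for power domination:
`P^0(S) = N[S]` and
`P^{i+1}(S) = P^i(S) ∪ { w : {w} = N[v] \ P^i(S) for some v ∈ P^i(S) }`. -/
def monitored {V : Type*} (G : SimpleGraph V) (S : Set V) : ℕ → Set V
  | 0 => closedNbhdSet G S
  | i + 1 => monitored G S i ∪
      {w | ∃ v ∈ monitored G S i,
        (insert v (G.neighborSet v)) \ monitored G S i = {w}}

/-- The zero-forcing sets `Q^i(S)`:
`Q^0(S) = S` and
`Q^{i+1}(S) = Q^i(S) ∪ { w : {w} = N[v] \ Q^i(S) for some v ∈ Q^i(S) }`. -/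
def forced {V : Type*} (G : SimpleGraph V) (S : Set V) : ℕ → Set V
  | 0 => S
  | i + 1 => forced G S i ∪
      {w | ∃ v ∈ forced G S i,
        (insert v (G.neighborSet v)) \ forced G S i = {w}}

/-- `S` is a power dominating set if the monitored sets eventually cover all vertices. -/
def IsPowerDominatingSet {V : Type*} (G : SimpleGraph V) (S : Set V) : Prop :=
  ∃ i, monitored G S i = Set.univ

/-- `S` is a zero forcing set if the forcing process eventually covers all vertices. -/
def IsZeroForcingSet {V : Type*} (G : SimpleGraph V) (S : Set V) : Prop :=
  ∃ i, forced G S i = Set.univ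

/-- The failed power domination number: the maximum cardinality of a set of
vertices that is not a power dominating set. -/
noncomputable def failedPowerDominationNumber {V : Type*} (G : SimpleGraph V) : ℕ :=
  sSup {k | ∃ S : Set V, ¬ IsPowerDominatingSet G S ∧ S.ncard = k}

/-- The failed zero forcing number: the maximum cardinality of a set of
vertices that is not a zero forcing set. -/
noncomputable def failedZeroForcingNumber {V : Type*} (G : SimpleGraph V) : ℕ :=
  sSup {k | ∃ S : Set V, ¬ IsZeroForcingSet G S ∧ S.ncard = k}

/-- The cycle `C_n = v_1 v_2 … v_n v_1` (vertex `v_j` is `(j-1 : Fin n)`) together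
with the `k + 1` chords `{v_1, v_i}, {v_1, v_{i+1}}, …, {v_1, v_{i+k-1}}` and
`{v_2, v_{i-1}}`. -/
def cycleWithChordsPlusOne (n i k : ℕ) : SimpleGraph (Fin n) :=
  SimpleGraph.fromRel (fun a b =>
    ((a : ℕ) + 1) % n = (b : ℕ) ∨
    ((a : ℕ) = 0 ∧ i ≤ (b : ℕ) + 1 ∧ (b : ℕ) + 2 ≤ i + k) ∨
    ((a : ℕ) = 1 ∧ (b : ℕ) + 2 = i))

namespace FPDN


variable {V : Type*} {G : SimpleGraph V} {S : Set V}

lemma monitored_mono : Monotone (monitored G S) := by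
  refine monotone_nat_of_le_succ fun m => ?_
  intro x hx; exact Or.inl hx

/-- `M` is closed under the forcing rule. -/
def Closed {V : Type*} (G : SimpleGraph V) (M : Set V) : Prop :=
  ∀ v w, v ∈ M → w ∈ insert v (G.neighborSet v) →
    (insert v (G.neighborSet v)) \ {w} ⊆ M → w ∈ M

lemma exists_step [Finite V] {T : Set V}
    (hT : T ⊆ ⋃ m, monitored G S m) : ∃ m, T ⊆ monitored G S m := by
  have hfin : T.Finite := Set.toFinite T
  refine Set.Finite.induction_on
    (motive := fun T _ => T ⊆ (⋃ m, monitored G S m) → ∃ m, T ⊆ monitored G S m)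
    T hfin (fun _ => ⟨0, by simp⟩) @?_ hT
  rintro a T ha hfinT ih hT'
  obtain ⟨m1, hm1⟩ := ih (fun x hx => hT' (Set.mem_insert_of_mem a hx))
  obtain ⟨m2, hm2⟩ := Set.mem_iUnion.mp (hT' (Set.mem_insert a T))
  refine ⟨max m1 m2, ?_⟩
  intro x hx
  rcases hx with rfl | hx
  · exact monitored_mono (le_max_right m1 m2) hm2
  · exact monitored_mono (le_max_left m1 m2) (hm1 hx)

lemma closed_iUnion_monitored [Finite V] :
    Closed G (⋃ m, monitored G S m) := by
  intro v w hv hw hsub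
  obtain ⟨m, hm⟩ := exists_step (T := insert v ((insert v (G.neighborSet v)) \ {w}))
    (by
      intro x hx
      rcases hx with rfl | hx
      · exact hv
      · exact hsub hx)
  by_cases hwm : w ∈ monitored G S m
  · exact Set.mem_iUnion.mpr ⟨m, hwm⟩
  · refine Set.mem_iUnion.mpr ⟨m + 1, Or.inr ⟨v, hm (Set.mem_insert _ _), ?_⟩⟩
    apply Set.eq_singleton_iff_unique_mem.mpr
    constructor
    · exact ⟨hw, hwm⟩
    · rintro x ⟨hx1, hx2⟩
      by_contra hne
      exact hx2 (hm (Set.mem_insert_of_mem _ ⟨hx1, hne⟩))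

lemma monitored_empty (m : ℕ) : monitored G (∅ : Set V) m = ∅ := by
  induction m with
  | zero => simp [monitored, closedNbhdSet]
  | succ m ih => simp [monitored, ih]

/-- `fM M t` : vertex with value `t` is in `M` (vacuous if `t ≥ n`). -/
def fM {n : ℕ} (M : Set (Fin n)) (t : ℕ) : Prop :=
  ∀ h : t < n, (⟨t, h⟩ : Fin n) ∈ M

lemma mem_of_val {n : ℕ} {M : Set (Fin n)} (x : Fin n) (t : ℕ) (ht : t < n)
    (h : (x : ℕ) = t) (hm : fM M t) : x ∈ M := by
  have : x = ⟨t, ht⟩ := Fin.ext h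
  rw [this]; exact hm ht

lemma up_chain (f : ℕ → Prop) (a b : ℕ) (h0 : f a) (h1 : f (a + 1))
    (step : ∀ j, a < j → j < b → f (j - 1) → f j → f (j + 1)) :
    ∀ j, a ≤ j → j ≤ b → f j := by
  intro j
  induction j using Nat.strong_induction_on with
  | _ j ih =>
    intro hja hjb
    rcases Nat.lt_or_ge j (a + 2) with hj | hj
    · rcases (by omega : j = a ∨ j = a + 1) with rfl | rfl
      · exact h0
      · exact h1
    · have f1 := ih (j - 2) (by omega) (by omega) (by omega)
      have f2 := ih (j - 1) (by omega) (by omega) (by omega)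
      have := step (j - 1) (by omega) (by omega)
        (by rw [show j - 1 - 1 = j - 2 from by omega]; exact f1) f2
      rwa [show j - 1 + 1 = j from by omega] at this

lemma down_chain (f : ℕ → Prop) (a b : ℕ) (h0 : f b) (h1 : f (b - 1))
    (step : ∀ j, a < j → j < b → f (j + 1) → f j → f (j - 1)) :
    ∀ j, a ≤ j → j ≤ b → f j := by
  have H : ∀ d j, a ≤ j → j ≤ b → b ≤ j + d → f j := by
    intro d
    induction d with
    | zero => intro j hja hjb hd; rw [show j = b from by omega]; exact h0
    | succ d ih =>
      intro j hja hjb hd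
      rcases Nat.lt_or_ge j (b - 1) with hj | hj
      · have f1 := ih (j + 2) (by omega) (by omega) (by omega)
        have f2 := ih (j + 1) (by omega) (by omega) (by omega)
        have := step (j + 1) (by omega) (by omega) f1 f2
        rwa [show j + 1 - 1 = j from by omega] at this
      · rcases (by omega : j = b ∨ j = b - 1) with rfl | h
        · exact h0
        · rw [h]; exact h1
  exact fun j hh1 hh2 => H b j hh1 hh2 (by omega)

section Graph

variable {n i k : ℕ}

lemma adj_elim (a b : Fin n) (h : (cycleWithChordsPlusOne n i k).Adj a b) :
    ((a : ℕ) + 1 = (b : ℕ)) ∨ ((b : ℕ) + 1 = (a : ℕ)) ∨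
    ((a : ℕ) = n - 1 ∧ (b : ℕ) = 0) ∨ ((b : ℕ) = n - 1 ∧ (a : ℕ) = 0) ∨
    ((a : ℕ) = 0 ∧ i ≤ (b : ℕ) + 1 ∧ (b : ℕ) + 2 ≤ i + k) ∨
    ((b : ℕ) = 0 ∧ i ≤ (a : ℕ) + 1 ∧ (a : ℕ) + 2 ≤ i + k) ∨
    ((a : ℕ) = 1 ∧ (b : ℕ) + 2 = i) ∨ ((b : ℕ) = 1 ∧ (a : ℕ) + 2 = i) := by
  rw [cycleWithChordsPlusOne, SimpleGraph.fromRel_adj] at h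
  obtain ⟨hne, h⟩ := h
  have ha := a.isLt
  have hb := b.isLt
  rcases h with (h | h | h) | (h | h | h)
  · rcases Nat.lt_or_ge ((a : ℕ) + 1) n with hl | hl
    · rw [Nat.mod_eq_of_lt hl] at h; exact Or.inl h
    · rw [show (a : ℕ) + 1 = n from by omega, Nat.mod_self] at h
      exact Or.inr (Or.inr (Or.inl ⟨by omega, h.symm⟩))
  · exact Or.inr (Or.inr (Or.inr (Or.inr (Or.inl h))))
  · exact Or.inr (Or.inr (Or.inr (Or.inr (Or.inr (Or.inr (Or.inl h))))))
  · rcases Nat.lt_or_ge ((b : ℕ) + 1) n with hl | hl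
    · rw [Nat.mod_eq_of_lt hl] at h; exact Or.inr (Or.inl h)
    · rw [show (b : ℕ) + 1 = n from by omega, Nat.mod_self] at h
      exact Or.inr (Or.inr (Or.inr (Or.inl ⟨by omega, h.symm⟩)))
  · exact Or.inr (Or.inr (Or.inr (Or.inr (Or.inr (Or.inl h)))))
  · exact Or.inr (Or.inr (Or.inr (Or.inr (Or.inr (Or.inr (Or.inr h))))))

lemma adj_cyc (a b : Fin n) (h : (a : ℕ) + 1 = (b : ℕ)) :
    (cycleWithChordsPlusOne n i k).Adj a b := by
  rw [cycleWithChordsPlusOne, SimpleGraph.fromRel_adj]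
  refine ⟨fun e => by rw [e] at h; omega, Or.inl (Or.inl ?_)⟩
  rw [Nat.mod_eq_of_lt (show (a : ℕ) + 1 < n from by have := b.isLt; omega)]
  exact h

lemma adj_last (hn : 6 ≤ n) (a b : Fin n) (ha : (a : ℕ) = n - 1) (hb : (b : ℕ) = 0) :
    (cycleWithChordsPlusOne n i k).Adj a b := by
  rw [cycleWithChordsPlusOne, SimpleGraph.fromRel_adj]
  refine ⟨fun e => by rw [e, hb] at ha; omega, Or.inl (Or.inl ?_)⟩
  rw [ha, hb, show n - 1 + 1 = n from by omega, Nat.mod_self]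

lemma adj_chord0 (hi : 5 ≤ i) (a b : Fin n) (ha : (a : ℕ) = 0)
    (h1 : i ≤ (b : ℕ) + 1) (h2 : (b : ℕ) + 2 ≤ i + k) :
    (cycleWithChordsPlusOne n i k).Adj a b := by
  rw [cycleWithChordsPlusOne, SimpleGraph.fromRel_adj]
  exact ⟨fun e => by rw [e] at ha; omega, Or.inl (Or.inr (Or.inl ⟨ha, h1, h2⟩))⟩

lemma adj_chord1 (hi : 5 ≤ i) (a b : Fin n) (ha : (a : ℕ) = 1) (hb : (b : ℕ) + 2 = i) :
    (cycleWithChordsPlusOne n i k).Adj a b := by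
  rw [cycleWithChordsPlusOne, SimpleGraph.fromRel_adj]
  exact ⟨fun e => by rw [e] at ha; omega, Or.inl (Or.inr (Or.inr ⟨ha, hb⟩))⟩

lemma force_gen {V : Type*} {G : SimpleGraph V} {M : Set V} (hM : Closed G M)
    (v w : V) (hv : v ∈ M) (hadj : G.Adj v w)
    (hnb : ∀ x : V, G.Adj v x → x ≠ w → x ∈ M) : w ∈ M := by
  refine hM v w hv (Set.mem_insert_iff.mpr (Or.inr hadj)) ?_
  rintro x ⟨hx, hxw⟩
  rcases Set.mem_insert_iff.mp hx with rfl | hx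
  · exact hv
  · exact hnb x hx (by simpa using hxw)

lemma key (hn : 6 ≤ n) (hi : 5 ≤ i) (hk : 1 ≤ k) (hik : i + k + 1 ≤ n)
    {M : Set (Fin n)} (hM : Closed (cycleWithChordsPlusOne n i k) M)
    (v : Fin n) (hv : insert v ((cycleWithChordsPlusOne n i k).neighborSet v) ⊆ M) :
    ∀ x : Fin n, x ∈ M := by
  have hGv : ∀ x : Fin n, (cycleWithChordsPlusOne n i k).Adj v x → x ∈ M :=
    fun x hx => hv (Set.mem_insert_iff.mpr (Or.inr hx))
  have hself : v ∈ M := hv (Set.mem_insert _ _)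

  have step3up : ∀ j, 2 ≤ j → j ≤ i - 3 → fM M (j - 1) → fM M j → fM M (j + 1) := by
    intro j hj1 hj2 hm1 hm0 hlt
    have hjn : j < n := by omega
    refine force_gen hM ⟨j, hjn⟩ ⟨j + 1, hlt⟩ (hm0 hjn) (adj_cyc _ _ rfl) ?_
    intro x hadj hxw
    have hxw' : (x : ℕ) ≠ j + 1 := fun e => hxw (Fin.ext e)
    have hval : ((⟨j, hjn⟩ : Fin n) : ℕ) = j := rfl
    have hxlt := x.isLt
    have helim := adj_elim (⟨j, hjn⟩ : Fin n) x hadj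
    have hx : (x : ℕ) = (j - 1) := by
      rcases helim with h|h|h|h|h|h|h|h <;> omega
    exact mem_of_val x (j - 1) (by omega) hx hm1

  have step3down : ∀ j, 2 ≤ j → j ≤ i - 3 → fM M (j + 1) → fM M j → fM M (j - 1) := by
    intro j hj1 hj2 hm1 hm0 hlt
    have hjn : j < n := by omega
    refine force_gen hM ⟨j, hjn⟩ ⟨j - 1, hlt⟩ (hm0 hjn) ((adj_cyc ⟨j - 1, hlt⟩ ⟨j, hjn⟩ (show j - 1 + 1 = j from by omega)).symm) ?_
    intro x hadj hxw
    have hxw' : (x : ℕ) ≠ j - 1 := fun e => hxw (Fin.ext e)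
    have hval : ((⟨j, hjn⟩ : Fin n) : ℕ) = j := rfl
    have hxlt := x.isLt
    have helim := adj_elim (⟨j, hjn⟩ : Fin n) x hadj
    have hx : (x : ℕ) = (j + 1) := by
      rcases helim with h|h|h|h|h|h|h|h <;> omega
    exact mem_of_val x (j + 1) (by omega) hx hm1

  have step5up : ∀ j, i - 1 ≤ j → j ≤ i + k - 2 → fM M 0 → fM M (j - 1) → fM M j → fM M (j + 1) := by
    intro j hj1 hj2 f0 hm1 hm0 hlt
    have hjn : j < n := by omega
    refine force_gen hM ⟨j, hjn⟩ ⟨j + 1, hlt⟩ (hm0 hjn) (adj_cyc _ _ rfl) ?_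
    intro x hadj hxw
    have hxw' : (x : ℕ) ≠ j + 1 := fun e => hxw (Fin.ext e)
    have hval : ((⟨j, hjn⟩ : Fin n) : ℕ) = j := rfl
    have hxlt := x.isLt
    have helim := adj_elim (⟨j, hjn⟩ : Fin n) x hadj
    have hx : (x : ℕ) = (j - 1) ∨ (x : ℕ) = 0 := by
      rcases helim with h|h|h|h|h|h|h|h <;> omega
    rcases hx with hx | hx
    · exact mem_of_val x (j - 1) (by omega) hx hm1
    · exact mem_of_val x 0 (by omega) hx f0

  have step5down : ∀ j, i - 1 ≤ j → j ≤ i + k - 2 → fM M 0 → fM M (j + 1) → fM M j → fM M (j - 1) := by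
    intro j hj1 hj2 f0 hm1 hm0 hlt
    have hjn : j < n := by omega
    refine force_gen hM ⟨j, hjn⟩ ⟨j - 1, hlt⟩ (hm0 hjn) ((adj_cyc ⟨j - 1, hlt⟩ ⟨j, hjn⟩ (show j - 1 + 1 = j from by omega)).symm) ?_
    intro x hadj hxw
    have hxw' : (x : ℕ) ≠ j - 1 := fun e => hxw (Fin.ext e)
    have hval : ((⟨j, hjn⟩ : Fin n) : ℕ) = j := rfl
    have hxlt := x.isLt
    have helim := adj_elim (⟨j, hjn⟩ : Fin n) x hadj
    have hx : (x : ℕ) = (j + 1) ∨ (x : ℕ) = 0 := by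
      rcases helim with h|h|h|h|h|h|h|h <;> omega
    rcases hx with hx | hx
    · exact mem_of_val x (j + 1) (by omega) hx hm1
    · exact mem_of_val x 0 (by omega) hx f0

  have step6up : ∀ j, i + k - 1 ≤ j → j ≤ n - 2 → fM M (j - 1) → fM M j → fM M (j + 1) := by
    intro j hj1 hj2 hm1 hm0 hlt
    have hjn : j < n := by omega
    refine force_gen hM ⟨j, hjn⟩ ⟨j + 1, hlt⟩ (hm0 hjn) (adj_cyc _ _ rfl) ?_
    intro x hadj hxw
    have hxw' : (x : ℕ) ≠ j + 1 := fun e => hxw (Fin.ext e)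
    have hval : ((⟨j, hjn⟩ : Fin n) : ℕ) = j := rfl
    have hxlt := x.isLt
    have helim := adj_elim (⟨j, hjn⟩ : Fin n) x hadj
    have hx : (x : ℕ) = (j - 1) := by
      rcases helim with h|h|h|h|h|h|h|h <;> omega
    exact mem_of_val x (j - 1) (by omega) hx hm1

  have step6down : ∀ j, i + k - 1 ≤ j → j ≤ n - 2 → fM M (j + 1) → fM M j → fM M (j - 1) := by
    intro j hj1 hj2 hm1 hm0 hlt
    have hjn : j < n := by omega
    refine force_gen hM ⟨j, hjn⟩ ⟨j - 1, hlt⟩ (hm0 hjn) ((adj_cyc ⟨j - 1, hlt⟩ ⟨j, hjn⟩ (show j - 1 + 1 = j from by omega)).symm) ?_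
    intro x hadj hxw
    have hxw' : (x : ℕ) ≠ j - 1 := fun e => hxw (Fin.ext e)
    have hval : ((⟨j, hjn⟩ : Fin n) : ℕ) = j := rfl
    have hxlt := x.isLt
    have helim := adj_elim (⟨j, hjn⟩ : Fin n) x hadj
    have hx : (x : ℕ) = (j + 1) := by
      rcases helim with h|h|h|h|h|h|h|h <;> omega
    exact mem_of_val x (j + 1) (by omega) hx hm1

  have step4up : fM M (i - 3) → fM M (i - 2) → fM M 1 → fM M (i - 1) := by
    intro hm3 hm2 f1 hlt
    refine force_gen hM ⟨i - 2, (by omega : i - 2 < n)⟩ ⟨i - 1, hlt⟩ (hm2 (by omega)) (adj_cyc _ _ (show i - 2 + 1 = i - 1 from by omega)) ?_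
    intro x hadj hxw
    have hxw' : (x : ℕ) ≠ i - 1 := fun e => hxw (Fin.ext e)
    have hval : ((⟨i - 2, (by omega : i - 2 < n)⟩ : Fin n) : ℕ) = i - 2 := rfl
    have hxlt := x.isLt
    have helim := adj_elim (⟨i - 2, (by omega : i - 2 < n)⟩ : Fin n) x hadj
    have hx : (x : ℕ) = (i - 3) ∨ (x : ℕ) = 1 := by
      rcases helim with h|h|h|h|h|h|h|h <;> omega
    rcases hx with hx | hx
    · exact mem_of_val x (i - 3) (by omega) hx hm3
    · exact mem_of_val x 1 (by omega) hx f1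

  have step4down : fM M (i - 1) → fM M (i - 2) → fM M 1 → fM M (i - 3) := by
    intro hm1 hm2 f1 hlt
    refine force_gen hM ⟨i - 2, (by omega : i - 2 < n)⟩ ⟨i - 3, hlt⟩ (hm2 (by omega)) ((adj_cyc ⟨i - 3, hlt⟩ ⟨i - 2, by omega⟩ (show i - 3 + 1 = i - 2 from by omega)).symm) ?_
    intro x hadj hxw
    have hxw' : (x : ℕ) ≠ i - 3 := fun e => hxw (Fin.ext e)
    have hval : ((⟨i - 2, (by omega : i - 2 < n)⟩ : Fin n) : ℕ) = i - 2 := rfl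
    have hxlt := x.isLt
    have helim := adj_elim (⟨i - 2, (by omega : i - 2 < n)⟩ : Fin n) x hadj
    have hx : (x : ℕ) = (i - 1) ∨ (x : ℕ) = 1 := by
      rcases helim with h|h|h|h|h|h|h|h <;> omega
    rcases hx with hx | hx
    · exact mem_of_val x (i - 1) (by omega) hx hm1
    · exact mem_of_val x 1 (by omega) hx f1

  have step1f0 : fM M 1 → fM M 2 → fM M (i - 2) → fM M 0 := by
    intro f1 f2 f42 hlt
    refine force_gen hM ⟨1, (by omega : 1 < n)⟩ ⟨0, hlt⟩ (f1 (by omega)) ((adj_cyc ⟨0, hlt⟩ ⟨1, by omega⟩ rfl).symm) ?_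
    intro x hadj hxw
    have hxw' : (x : ℕ) ≠ 0 := fun e => hxw (Fin.ext e)
    have hval : ((⟨1, (by omega : 1 < n)⟩ : Fin n) : ℕ) = 1 := rfl
    have hxlt := x.isLt
    have helim := adj_elim (⟨1, (by omega : 1 < n)⟩ : Fin n) x hadj
    have hx : (x : ℕ) = 2 ∨ (x : ℕ) = (i - 2) := by
      rcases helim with h|h|h|h|h|h|h|h <;> omega
    rcases hx with hx | hx
    · exact mem_of_val x 2 (by omega) hx f2
    · exact mem_of_val x (i - 2) (by omega) hx f42

  have step7_0 : fM M (n - 2) → fM M (n - 1) → fM M 0 := by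
    intro hm2 hm1 hlt
    refine force_gen hM ⟨n - 1, (by omega : n - 1 < n)⟩ ⟨0, hlt⟩ (hm1 (by omega)) (adj_last hn _ _ rfl rfl) ?_
    intro x hadj hxw
    have hxw' : (x : ℕ) ≠ 0 := fun e => hxw (Fin.ext e)
    have hval : ((⟨n - 1, (by omega : n - 1 < n)⟩ : Fin n) : ℕ) = n - 1 := rfl
    have hxlt := x.isLt
    have helim := adj_elim (⟨n - 1, (by omega : n - 1 < n)⟩ : Fin n) x hadj
    have hx : (x : ℕ) = (n - 2) := by
      rcases helim with h|h|h|h|h|h|h|h <;> omega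
    exact mem_of_val x (n - 2) (by omega) hx hm2

  have step7down : fM M 0 → fM M (n - 1) → fM M (n - 2) := by
    intro f0 hm1 hlt
    refine force_gen hM ⟨n - 1, (by omega : n - 1 < n)⟩ ⟨n - 2, hlt⟩ (hm1 (by omega)) ((adj_cyc ⟨n - 2, hlt⟩ ⟨n - 1, by omega⟩ (show n - 2 + 1 = n - 1 from by omega)).symm) ?_
    intro x hadj hxw
    have hxw' : (x : ℕ) ≠ n - 2 := fun e => hxw (Fin.ext e)
    have hval : ((⟨n - 1, (by omega : n - 1 < n)⟩ : Fin n) : ℕ) = n - 1 := rfl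
    have hxlt := x.isLt
    have helim := adj_elim (⟨n - 1, (by omega : n - 1 < n)⟩ : Fin n) x hadj
    have hx : (x : ℕ) = 0 := by
      rcases helim with h|h|h|h|h|h|h|h <;> omega
    exact mem_of_val x 0 (by omega) hx f0

  have step0_1 : fM M 0 → fM M (n - 1) → (∀ t, i - 1 ≤ t → t ≤ i + k - 2 → fM M t) → fM M 1 := by
    intro f0 fn1 fch hlt
    refine force_gen hM ⟨0, by omega⟩ ⟨1, hlt⟩ (f0 (by omega)) (adj_cyc _ _ rfl) ?_
    intro x hadj hxw
    have hxw' : (x : ℕ) ≠ 1 := fun e => hxw (Fin.ext e)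
    have hval : ((⟨0, by omega⟩ : Fin n) : ℕ) = 0 := rfl
    have hxlt := x.isLt
    have helim := adj_elim (⟨0, by omega⟩ : Fin n) x hadj
    have hx : (x : ℕ) = n - 1 ∨ (i - 1 ≤ (x : ℕ) ∧ (x : ℕ) ≤ i + k - 2) := by
      rcases helim with h|h|h|h|h|h|h|h <;> omega
    rcases hx with hx | ⟨h1, h2⟩
    · exact mem_of_val x (n - 1) (by omega) hx fn1
    · exact mem_of_val x (x : ℕ) hxlt rfl (fch _ h1 h2)

  have finish : fM M 0 → fM M 1 → fM M 2 → fM M (i - 2) → fM M (i - 1) → ∀ x : Fin n, x ∈ M := by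
    intro f0 f1 f2 f42 f41
    have upA : ∀ t, 1 ≤ t → t ≤ i - 2 → fM M t := by
      refine up_chain _ 1 (i - 2) f1 f2 ?_
      intro t h1 h2 hm1 hm0
      exact step3up t (by omega) (by omega) hm1 hm0
    have upB : ∀ t, i - 2 ≤ t → t ≤ n - 1 → fM M t := by
      refine up_chain _ (i - 2) (n - 1) f42
        (by rw [show i - 2 + 1 = i - 1 from by omega]; exact f41) ?_
      intro t h1 h2 hm1 hm0
      rcases Nat.lt_or_ge t (i + k - 1) with h | h
      · exact step5up t (by omega) (by omega) f0 hm1 hm0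
      · exact step6up t (by omega) (by omega) hm1 hm0
    intro x
    have hxlt := x.isLt
    have hfx : fM M (x : ℕ) := by
      rcases (by omega : (x : ℕ) = 0 ∨ (1 ≤ (x : ℕ) ∧ (x : ℕ) ≤ i - 2) ∨
        (i - 2 ≤ (x : ℕ) ∧ (x : ℕ) ≤ n - 1)) with h | ⟨h1, h2⟩ | ⟨h1, h2⟩
      · rw [h]; exact f0
      · exact upA _ h1 h2
      · exact upB _ h1 h2
    exact mem_of_val x _ hxlt rfl hfx
  have finish2 : fM M 0 → fM M 1 → fM M (i - 2) → fM M (i - 1) → ∀ x : Fin n, x ∈ M := by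
    intro f0 f1 f42 f41
    have f43 : fM M (i - 3) := step4down f41 f42 f1
    have downA : ∀ t, 2 ≤ t → t ≤ i - 2 → fM M t := by
      refine down_chain _ 2 (i - 2) f42
        (by rw [show i - 2 - 1 = i - 3 from by omega]; exact f43) ?_
      intro t h1 h2 hm1 hm0
      exact step3down t (by omega) (by omega) hm1 hm0
    exact finish f0 f1 (downA 2 le_rfl (by omega)) f42 f41

  obtain ⟨j, hjn⟩ := v
  have fj : fM M j := fun h => hself
  rcases (by omega : j = 0 ∨ j = 1 ∨ (2 ≤ j ∧ j ≤ i - 3) ∨ j = i - 2 ∨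
      (i - 1 ≤ j ∧ j ≤ i + k - 2) ∨ (i + k - 1 ≤ j ∧ j ≤ n - 2) ∨ j = n - 1) with
    hj | hj | ⟨hj1, hj2⟩ | hj | ⟨hj1, hj2⟩ | ⟨hj1, hj2⟩ | hj
  · -- j = 0
    subst hj
    have f0 : fM M 0 := fj
    have f1 : fM M 1 := fun h => hGv ⟨1, h⟩ (adj_cyc _ _ rfl)
    have fn1 : fM M (n - 1) := fun h => hGv ⟨n - 1, h⟩ ((adj_last hn ⟨n - 1, h⟩ ⟨0, hjn⟩ rfl rfl).symm)
    have fch : ∀ t, i - 1 ≤ t → t ≤ i + k - 2 → fM M t := fun t h1 h2 ht =>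
      hGv ⟨t, ht⟩ (adj_chord0 hi _ _ rfl (show i ≤ t + 1 from by omega) (show t + 2 ≤ i + k from by omega))
    have fn2 : fM M (n - 2) := step7down f0 fn1
    have downR : ∀ t, i + k - 2 ≤ t → t ≤ n - 1 → fM M t := by
      refine down_chain _ (i + k - 2) (n - 1) fn1
        (by rw [show n - 1 - 1 = n - 2 from by omega]; exact fn2) ?_
      intro t h1 h2 hm1 hm0
      exact step6down t (by omega) (by omega) hm1 hm0
    have fi : fM M i := by
      rcases Nat.lt_or_ge k 2 with h | h
      · exact downR i (by omega) (by omega)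
      · exact fch i (by omega) (by omega)
    have f42 : fM M (i - 2) := by
      have := step5down (i - 1) (by omega) (by omega) f0
        (by rw [show i - 1 + 1 = i from by omega]; exact fi) (fch (i - 1) (by omega) (by omega))
      rwa [show i - 1 - 1 = i - 2 from by omega] at this
    exact finish2 f0 f1 f42 (fch (i - 1) (by omega) (by omega))
  · -- j = 1
    subst hj
    have f1 : fM M 1 := fj
    have f0 : fM M 0 := fun h => hGv ⟨0, h⟩ ((adj_cyc ⟨0, h⟩ ⟨1, hjn⟩ rfl).symm)
    have f2 : fM M 2 := fun h => hGv ⟨2, h⟩ (adj_cyc _ _ rfl)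
    have f42 : fM M (i - 2) := fun h => hGv ⟨i - 2, h⟩
      (adj_chord1 hi ⟨1, hjn⟩ ⟨i - 2, h⟩ rfl (show i - 2 + 2 = i from by omega))
    have upA : ∀ t, 1 ≤ t → t ≤ i - 2 → fM M t := by
      refine up_chain _ 1 (i - 2) f1 f2 ?_
      intro t h1 h2 hm1 hm0
      exact step3up t (by omega) (by omega) hm1 hm0
    have f41 : fM M (i - 1) := step4up (upA (i - 3) (by omega) (by omega)) f42 f1
    exact finish2 f0 f1 f42 f41
  · -- 2 ≤ j ≤ i - 3
    have fp : fM M (j - 1) := fun h => hGv ⟨j - 1, h⟩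
      ((adj_cyc ⟨j - 1, h⟩ ⟨j, hjn⟩ (show j - 1 + 1 = j from by omega)).symm)
    have fs : fM M (j + 1) := fun h => hGv ⟨j + 1, h⟩ (adj_cyc _ _ rfl)
    have upA : ∀ t, j - 1 ≤ t → t ≤ i - 2 → fM M t := by
      refine up_chain _ (j - 1) (i - 2) fp
        (by rw [show j - 1 + 1 = j from by omega]; exact fj) ?_
      intro t h1 h2 hm1 hm0
      exact step3up t (by omega) (by omega) hm1 hm0
    have downA : ∀ t, 1 ≤ t → t ≤ j + 1 → fM M t := by
      refine down_chain _ 1 (j + 1) fs (by rw [show j + 1 - 1 = j from by omega]; exact fj) ?_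
      intro t h1 h2 hm1 hm0
      exact step3down t (by omega) (by omega) hm1 hm0
    have f1 : fM M 1 := downA 1 le_rfl (by omega)
    have f2 : fM M 2 := by
      rcases Nat.lt_or_ge (j + 1) 2 with h | h
      · exact upA 2 (by omega) (by omega)
      · exact downA 2 (by omega) h
    have f42 : fM M (i - 2) := upA (i - 2) (by omega) le_rfl
    have f41 : fM M (i - 1) := step4up (upA (i - 3) (by omega) (by omega)) f42 f1
    exact finish2 (step1f0 f1 f2 f42) f1 f42 f41
  · -- j = i - 2
    subst hj
    have f42 : fM M (i - 2) := fj
    have f43 : fM M (i - 3) := fun h => hGv ⟨i - 3, h⟩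
      ((adj_cyc ⟨i - 3, h⟩ ⟨i - 2, hjn⟩ (show i - 3 + 1 = i - 2 from by omega)).symm)
    have f41 : fM M (i - 1) := fun h => hGv ⟨i - 1, h⟩
      (adj_cyc _ _ (show i - 2 + 1 = i - 1 from by omega))
    have f1 : fM M 1 := fun h => hGv ⟨1, h⟩
      ((adj_chord1 hi ⟨1, h⟩ ⟨i - 2, hjn⟩ rfl (show i - 2 + 2 = i from by omega)).symm)
    have downA : ∀ t, 2 ≤ t → t ≤ i - 2 → fM M t := by
      refine down_chain _ 2 (i - 2) f42
        (by rw [show i - 2 - 1 = i - 3 from by omega]; exact f43) ?_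
      intro t h1 h2 hm1 hm0
      exact step3down t (by omega) (by omega) hm1 hm0
    exact finish2 (step1f0 f1 (downA 2 le_rfl (by omega)) f42) f1 f42 f41
  · -- i - 1 ≤ j ≤ i + k - 2
    have f0 : fM M 0 := fun h => hGv ⟨0, h⟩
      ((adj_chord0 hi ⟨0, h⟩ ⟨j, hjn⟩ rfl (show i ≤ j + 1 from by omega)
        (show j + 2 ≤ i + k from by omega)).symm)
    have fp : fM M (j - 1) := fun h => hGv ⟨j - 1, h⟩
      ((adj_cyc ⟨j - 1, h⟩ ⟨j, hjn⟩ (show j - 1 + 1 = j from by omega)).symm)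
    have fs : fM M (j + 1) := fun h => hGv ⟨j + 1, h⟩ (adj_cyc _ _ rfl)
    have upB : ∀ t, j - 1 ≤ t → t ≤ n - 1 → fM M t := by
      refine up_chain _ (j - 1) (n - 1) fp
        (by rw [show j - 1 + 1 = j from by omega]; exact fj) ?_
      intro t h1 h2 hm1 hm0
      rcases Nat.lt_or_ge t (i + k - 1) with h | h
      · exact step5up t (by omega) (by omega) f0 hm1 hm0
      · exact step6up t (by omega) (by omega) hm1 hm0
    have downB : ∀ t, i - 2 ≤ t → t ≤ j + 1 → fM M t := by
      refine down_chain _ (i - 2) (j + 1) fs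
        (by rw [show j + 1 - 1 = j from by omega]; exact fj) ?_
      intro t h1 h2 hm1 hm0
      exact step5down t (by omega) (by omega) f0 hm1 hm0
    have fch : ∀ t, i - 1 ≤ t → t ≤ i + k - 2 → fM M t := by
      intro t h1 h2
      rcases Nat.lt_or_ge t (j + 1) with h | h
      · exact downB t (by omega) (by omega)
      · exact upB t (by omega) (by omega)
    have f1 : fM M 1 := step0_1 f0 (upB (n - 1) (by omega) le_rfl) fch
    exact finish2 f0 f1 (downB (i - 2) le_rfl (by omega)) (downB (i - 1) (by omega) (by omega))
  · -- i + k - 1 ≤ j ≤ n - 2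
    have fp : fM M (j - 1) := fun h => hGv ⟨j - 1, h⟩
      ((adj_cyc ⟨j - 1, h⟩ ⟨j, hjn⟩ (show j - 1 + 1 = j from by omega)).symm)
    have fs : fM M (j + 1) := fun h => hGv ⟨j + 1, h⟩ (adj_cyc _ _ rfl)
    have upC : ∀ t, j - 1 ≤ t → t ≤ n - 1 → fM M t := by
      refine up_chain _ (j - 1) (n - 1) fp
        (by rw [show j - 1 + 1 = j from by omega]; exact fj) ?_
      intro t h1 h2 hm1 hm0
      exact step6up t (by omega) (by omega) hm1 hm0
    have f0 : fM M 0 := step7_0 (upC (n - 2) (by omega) (by omega)) (upC (n - 1) (by omega) le_rfl)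
    have downC : ∀ t, i + k - 2 ≤ t → t ≤ j + 1 → fM M t := by
      refine down_chain _ (i + k - 2) (j + 1) fs
        (by rw [show j + 1 - 1 = j from by omega]; exact fj) ?_
      intro t h1 h2 hm1 hm0
      exact step6down t (by omega) (by omega) hm1 hm0
    have down5 : ∀ t, i - 2 ≤ t → t ≤ i + k - 1 → fM M t := by
      refine down_chain _ (i - 2) (i + k - 1) (downC (i + k - 1) (by omega) (by omega))
        (by rw [show i + k - 1 - 1 = i + k - 2 from by omega]
            exact downC (i + k - 2) le_rfl (by omega)) ?_
      intro t h1 h2 hm1 hm0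
      exact step5down t (by omega) (by omega) f0 hm1 hm0
    have fch : ∀ t, i - 1 ≤ t → t ≤ i + k - 2 → fM M t := fun t h1 h2 =>
      down5 t (by omega) (by omega)
    have f1 : fM M 1 := step0_1 f0 (upC (n - 1) (by omega) le_rfl) fch
    exact finish2 f0 f1 (down5 (i - 2) le_rfl (by omega)) (down5 (i - 1) (by omega) (by omega))
  · -- j = n - 1
    subst hj
    have fn1 : fM M (n - 1) := fj
    have fn2 : fM M (n - 2) := fun h => hGv ⟨n - 2, h⟩
      ((adj_cyc ⟨n - 2, h⟩ ⟨n - 1, hjn⟩ (show n - 2 + 1 = n - 1 from by omega)).symm)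
    have f0 : fM M 0 := fun h => hGv ⟨0, h⟩ (adj_last hn ⟨n - 1, hjn⟩ ⟨0, h⟩ rfl rfl)
    have downC : ∀ t, i + k - 2 ≤ t → t ≤ n - 1 → fM M t := by
      refine down_chain _ (i + k - 2) (n - 1) fn1
        (by rw [show n - 1 - 1 = n - 2 from by omega]; exact fn2) ?_
      intro t h1 h2 hm1 hm0
      exact step6down t (by omega) (by omega) hm1 hm0
    have down5 : ∀ t, i - 2 ≤ t → t ≤ i + k - 1 → fM M t := by
      refine down_chain _ (i - 2) (i + k - 1) (downC (i + k - 1) (by omega) (by omega))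
        (by rw [show i + k - 1 - 1 = i + k - 2 from by omega]
            exact downC (i + k - 2) le_rfl (by omega)) ?_
      intro t h1 h2 hm1 hm0
      exact step5down t (by omega) (by omega) f0 hm1 hm0
    have fch : ∀ t, i - 1 ≤ t → t ≤ i + k - 2 → fM M t := fun t h1 h2 =>
      down5 t (by omega) (by omega)
    have f1 : fM M 1 := step0_1 f0 fn1 fch
    exact finish2 f0 f1 (down5 (i - 2) le_rfl (by omega)) (down5 (i - 1) (by omega) (by omega))

end Graph
end FPDN

theorem failedPowerDominationNumber_cycleWithChordsPlusOne
    (n i k : ℕ) (hn : 6 ≤ n) (hi : 5 ≤ i) (hk : 1 ≤ k) (hik : i + k + 1 ≤ n) :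
    failedPowerDominationNumber (cycleWithChordsPlusOne n i k) = 0 := by
  classical
  have hnempty : Nonempty (Fin n) := ⟨⟨0, by omega⟩⟩
  have hset : {m | ∃ S : Set (Fin n),
      ¬ IsPowerDominatingSet (cycleWithChordsPlusOne n i k) S ∧ S.ncard = m} = {0} := by
    ext m
    simp only [Set.mem_setOf_eq, Set.mem_singleton_iff]
    constructor
    · rintro ⟨S, hS, rfl⟩
      by_contra hm
      have hSne : S.Nonempty := by
        rcases S.eq_empty_or_nonempty with rfl | h
        · simp at hm
        · exact h
      obtain ⟨v, hvS⟩ := hSne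
      apply hS
      have hsub : insert v ((cycleWithChordsPlusOne n i k).neighborSet v) ⊆
          ⋃ m, monitored (cycleWithChordsPlusOne n i k) S m := by
        intro x hx
        refine Set.mem_iUnion.mpr ⟨0, ?_⟩
        rcases Set.mem_insert_iff.mp hx with rfl | hx
        · exact Set.mem_union_left _ hvS
        · exact Set.mem_union_right _ ⟨v, hvS, hx⟩
      have hall := FPDN.key hn hi hk hik FPDN.closed_iUnion_monitored v hsub
      obtain ⟨m, hm'⟩ := FPDN.exists_step (T := (Set.univ : Set (Fin n)))
        (fun x _ => hall x)
      exact ⟨m, Set.eq_univ_of_univ_subset hm'⟩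
    · rintro rfl
      refine ⟨∅, ?_, Set.ncard_empty _⟩
      rintro ⟨m, hm⟩
      rw [FPDN.monitored_empty m] at hm
      exact Set.empty_ne_univ hm
  rw [failedPowerDominationNumber, hset, csSup_singleton]
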